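/- For the size-m LSS dictionary D^m with nonnegative autocorrelation Γ non-increasing in |u|, the coherence μ(D^m) = max_{i≠j} |⟨d_i^{(m)}, d_j^{(m)}⟩| equals the correlation between two consecutive atoms, namely Γ(2τ/(m−1)). Moreover, the coherence is nondecreasing in the dictionary size: μ(D^{m+1}) ≥ μ(D^m) for every m ≥ 2. -/
import Mathlib


/-- For the size-`m` LSS dictionary with nonnegative autocorrelation
`Γ` non-increasing in `|u|`, the coherence `μ(D^m) = max_{i≠j} |⟨d_i, d_j⟩|`
equals `Γ(2τ/(m−1))`, the correlation of two consecutive atoms; moreover the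
coherence is nondecreasing in the dictionary size: `μ(D^{m+1}) ≥ μ(D^m)`. -/
theorem lss_dictionary_coherence
    {l : ℕ} (τ : ℝ) (hτ : 0 < τ) (Γ γ : ℝ → ℝ)
    (hΓ : ∀ u, Γ u = γ |u|) (hγ : Antitone γ) (hΓ0 : Γ 0 = 1)
    (hΓnonneg : ∀ u, 0 ≤ Γ u)
    (m : ℕ) (hm : 2 ≤ m)
    (d : ℕ → ℕ → Fin l → ℝ)
    (hpos : ∀ M k i, 0 ≤ d M k i)
    (hcorr : ∀ M : ℕ, (M = m ∨ M = m + 1) → ∀ i j : ℕ, i < M → j < M →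
      (∑ idx, d M i idx * d M j idx)
        = Γ ((-τ + (2 * τ / ((M : ℝ) - 1)) * (i : ℝ))
            - (-τ + (2 * τ / ((M : ℝ) - 1)) * (j : ℝ))))
    (coh : ℕ → ℝ)
    (hcoh : ∀ M : ℕ, coh M = ⨆ p : {q : Fin M × Fin M // q.1 ≠ q.2},
      |∑ idx, d M ((p.1.1 : ℕ)) idx * d M ((p.1.2 : ℕ)) idx|) :
    coh m = Γ (2 * τ / ((m : ℝ) - 1)) ∧ coh m ≤ coh (m + 1) := by
  have key : ∀ M : ℕ, (M = m ∨ M = m + 1) → coh M = Γ (2 * τ / ((M : ℝ) - 1)) := by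
    intro M hM
    have hM2 : 2 ≤ M := by rcases hM with h | h <;> omega
    have hM1 : (1 : ℝ) ≤ (M : ℝ) - 1 := by
      have : (2 : ℝ) ≤ (M : ℝ) := by exact_mod_cast hM2
      linarith
    set Δ : ℝ := 2 * τ / ((M : ℝ) - 1) with hΔdef
    have hΔpos : 0 < Δ := by
      apply div_pos (by linarith) (by linarith)
    -- values of the inner products
    have hval : ∀ i j : ℕ, i < M → j < M →
        (∑ idx, d M i idx * d M j idx) = γ (Δ * |(i : ℝ) - (j : ℝ)|) := by
      intro i j hi hj
      rw [hcorr M hM i j hi hj]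
      have : (-τ + Δ * (i : ℝ)) - (-τ + Δ * (j : ℝ)) = Δ * ((i : ℝ) - (j : ℝ)) := by ring
      rw [this, hΓ, abs_mul, abs_of_pos hΔpos]
    have hΓΔ : Γ Δ = γ Δ := by rw [hΓ, abs_of_pos hΔpos]
    rw [hcoh M]
    have hne : Nonempty {q : Fin M × Fin M // q.1 ≠ q.2} := by
      refine ⟨⟨(⟨0, by omega⟩, ⟨1, by omega⟩), ?_⟩⟩
      simp [Fin.ext_iff]
    apply le_antisymm
    · apply ciSup_le
      intro ⟨⟨i, j⟩, hij⟩
      have h := hval i j i.isLt j.isLt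
      simp only at h ⊢
      rw [h]
      have hij' : (i : ℕ) ≠ (j : ℕ) := fun h => hij (by ext; exact h)
      have habs : (1 : ℝ) ≤ |(i : ℝ) - (j : ℝ)| := by
        have : (i : ℝ) - (j : ℝ) ≠ 0 := by
          intro h0
          apply hij'
          have : (i : ℝ) = (j : ℝ) := by linarith
          exact_mod_cast this
        have h1 : ((i : ℕ) : ℝ) - ((j : ℕ) : ℝ) = (((i : ℕ) : ℤ) : ℝ) - (((j : ℕ) : ℤ) : ℝ) := by
          push_cast; ring
        rw [h1, ← Int.cast_sub, ← Int.cast_abs]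
        have hz : ((i : ℕ) : ℤ) - ((j : ℕ) : ℤ) ≠ 0 := by
          simpa [sub_eq_zero] using fun h => hij' (by exact_mod_cast h)
        exact_mod_cast Int.one_le_abs hz
      have hle : Δ ≤ Δ * |(i : ℝ) - (j : ℝ)| := by
        nlinarith
      have := hγ hle
      have hnn : 0 ≤ γ (Δ * |(i : ℝ) - (j : ℝ)|) := by
        rw [← hval i j i.isLt j.isLt]
        exact Finset.sum_nonneg fun idx _ => mul_nonneg (hpos M i idx) (hpos M j idx)
      rw [abs_of_nonneg hnn, hΓΔ]
      exact this
    · have hb : BddAbove (Set.range fun p : {q : Fin M × Fin M // q.1 ≠ q.2} =>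
          |∑ idx, d M ((p.1.1 : ℕ)) idx * d M ((p.1.2 : ℕ)) idx|) :=
        Set.Finite.bddAbove (Set.finite_range _)
      have := le_ciSup hb (⟨(⟨0, by omega⟩, ⟨1, by omega⟩), by simp [Fin.ext_iff]⟩ :
        {q : Fin M × Fin M // q.1 ≠ q.2})
      refine le_trans ?_ this
      simp only
      rw [hval 0 1 (by omega) (by omega)]
      rw [hΓΔ]
      have : Δ * |(0 : ℝ) - (1 : ℝ)| = Δ := by norm_num
      rw [Nat.cast_zero, Nat.cast_one, this]
      have hnn : 0 ≤ γ Δ := by rw [← hΓΔ]; exact hΓnonneg Δ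
      rw [abs_of_nonneg hnn]
  constructor
  · exact key m (Or.inl rfl)
  · rw [key m (Or.inl rfl), key (m+1) (Or.inr rfl)]
    have hm' : (2 : ℝ) ≤ (m : ℝ) := by exact_mod_cast hm
    have h1 : ((m:ℝ) + 1) - 1 = (m : ℝ) := by ring
    rw [Nat.cast_add, Nat.cast_one, h1]
    have hle : 2 * τ / (m : ℝ) ≤ 2 * τ / ((m : ℝ) - 1) := by
      apply div_le_div_of_nonneg_left (by linarith) (by linarith) (by linarith)
    have hpos1 : 0 < 2 * τ / (m : ℝ) := div_pos (by linarith) (by linarith)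
    have hpos2 : 0 < 2 * τ / ((m : ℝ) - 1) := div_pos (by linarith) (by linarith)
    rw [hΓ, hΓ, abs_of_pos hpos1, abs_of_pos hpos2]
    exact hγ hle
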